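/- For any binary-input discrete memoryless channels W and V with the same output alphabet, I(W, V) ≤ I(W), where I(W) = I(W, W) is the symmetric mutual information of W. Equivalently, mismatched decoding metrics cannot increase the symmetric-information functional. -/

import Mathlib

open Finset Real

noncomputable section

/-- Binary symmetric channel with crossover probability `α`: `BSC α x y = W(y|x)`. -/
def BSC (α : ℝ) : Bool → Bool → ℝ := fun x y => if y = x then 1 - α else α

/-- Arıkan's minus polar transform. -/
def Wminus {Y : Type*} (W : Bool → Y → ℝ) : Bool → Y × Y → ℝ :=
  fun u₁ y => ∑ u₂ : Bool, (1/2) * W (u₁ ^^ u₂) y.1 * W u₂ y.2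

/-- Arıkan's plus polar transform; output `(y₁, y₂, u₁)`. -/
def Wplus {Y : Type*} (W : Bool → Y → ℝ) : Bool → Y × Y × Bool → ℝ :=
  fun u₂ y => (1/2) * W (y.2.2 ^^ u₂) y.1 * W u₂ y.2.1

/-- Mismatched information functional `I(W, V)`. -/
def Ifun {Y : Type*} [Fintype Y] (W V : Bool → Y → ℝ) : ℝ :=
  ∑ y : Y, ∑ x : Bool, (1/2) * W x y *
    Real.logb 2 (V x y / ((1/2) * V false y + (1/2) * V true y))

/-- Output alphabet after applying a sequence of polar transforms
(`true` = plus, `false` = minus, head applied first). -/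
def polarType (Y : Type u) : List Bool → Type u
  | [] => Y
  | true :: s => polarType (Y × Y × Bool) s
  | false :: s => polarType (Y × Y) s

/-- The synthesized channel `W^s`. -/
def polarChan {Y : Type*} (W : Bool → Y → ℝ) : (s : List Bool) → Bool → polarType Y s → ℝ
  | [] => W
  | true :: s => polarChan (Wplus W) s
  | false :: s => polarChan (Wminus W) s

instance polarFintype (Y : Type*) [Fintype Y] : ∀ s : List Bool, Fintype (polarType Y s)
  | [] => inferInstanceAs (Fintype Y)
  | true :: s => polarFintype (Y × Y × Bool) s
  | false :: s => polarFintype (Y × Y) s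


/-- Average output distribution. -/
def auxQ {Y : Type*} (V : Bool → Y → ℝ) (y : Y) : ℝ := (1/2) * V false y + (1/2) * V true y

/-- Auxiliary comparison measure. -/
def auxT {Y : Type*} (W V : Bool → Y → ℝ) (x : Bool) (y : Y) : ℝ :=
  if 0 < W x y then 1/2 * V x y * auxQ W y / auxQ V y else 0

lemma aux_pt (p a b : ℝ) (hp : 0 ≤ p) (ha : 0 < a) (hb : 0 < b) :
    p * Real.logb 2 b + (p - p * b / a) / Real.log 2 ≤ p * Real.logb 2 a := by
  have hL : (0:ℝ) < Real.log 2 := Real.log_pos one_lt_two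
  have h1 := Real.log_le_sub_one_of_pos (div_pos hb ha)
  rw [Real.log_div hb.ne' ha.ne'] at h1
  have h2 : p * Real.log b - p * Real.log a ≤ p * (b / a) - p := by nlinarith
  rw [Real.logb, Real.logb]
  have e1 : p * (Real.log b / Real.log 2) + (p - p * b / a) / Real.log 2
      = (p * Real.log b + (p - p * (b / a))) / Real.log 2 := by ring
  have e2 : p * (Real.log a / Real.log 2) = (p * Real.log a) / Real.log 2 := by ring
  rw [e1, e2, div_le_div_iff_of_pos_right hL]
  linarith

/-- `I(W,V) ≤ I(W) = I(W,W)`: a mismatched decoding metric cannot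
increase the symmetric-information functional. -/
theorem Ifun_mismatch_le_matched {Y : Type*} [Fintype Y] (W V : Bool → Y → ℝ)
    (hW0 : ∀ x y, 0 ≤ W x y) (hW1 : ∀ x, ∑ y, W x y = 1)
    (hV0 : ∀ x y, 0 ≤ V x y) (hV1 : ∀ x, ∑ y, V x y = 1)
    (hpos : ∀ x y, 0 < W x y → 0 < V x y) :
    Ifun W V ≤ Ifun W W := by
  classical
  have hL : (0:ℝ) < Real.log 2 := Real.log_pos one_lt_two
  -- key pointwise inequality
  have hkey : ∀ y : Y, ∀ x : Bool,
      1/2 * W x y * Real.logb 2 (V x y / auxQ V y)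
        + (1/2 * W x y - auxT W V x y) / Real.log 2
      ≤ 1/2 * W x y * Real.logb 2 (W x y / auxQ W y) := by
    intro y x
    by_cases hw : 0 < W x y
    · have hv := hpos x y hw
      have hqw : 0 < auxQ W y := by
        cases x <;> simp only [auxQ] <;> nlinarith [hW0 false y, hW0 true y]
      have hqv : 0 < auxQ V y := by
        cases x <;> simp only [auxQ] <;> nlinarith [hV0 false y, hV0 true y]
      have ht : auxT W V x y
          = 1/2 * W x y * (V x y / auxQ V y) / (W x y / auxQ W y) := by
        rw [auxT, if_pos hw]
        field_simp
      have := aux_pt (1/2 * W x y) (W x y / auxQ W y) (V x y / auxQ V y)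
        (by positivity) (div_pos hw hqw) (div_pos hv hqv)
      rw [ht]
      exact this
    · have hw0 : W x y = 0 := le_antisymm (not_lt.mp hw) (hW0 x y)
      have ht0 : auxT W V x y = 0 := by rw [auxT, if_neg hw]
      rw [hw0, ht0]
      simp
  -- total mass of W-terms
  have hQW : ∑ y : Y, auxQ W y = 1 := by
    simp only [auxQ]
    rw [Finset.sum_add_distrib, ← Finset.mul_sum, ← Finset.mul_sum, hW1, hW1]
    norm_num
  have hP : ∑ y : Y, ∑ x : Bool, 1/2 * W x y = 1 := by
    calc ∑ y : Y, ∑ x : Bool, 1/2 * W x y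
        = ∑ y : Y, auxQ W y := Finset.sum_congr rfl fun y _ => by
          simp only [auxQ, Fintype.sum_bool]; ring
      _ = 1 := hQW
  -- the comparison measure has mass at most 1
  have hinner : ∀ y : Y, ∑ x : Bool, auxT W V x y ≤ auxQ W y := by
    intro y
    have hqw0 : 0 ≤ auxQ W y := by
      simp only [auxQ]; nlinarith [hW0 false y, hW0 true y]
    by_cases hqv : 0 < auxQ V y
    · have hx : ∀ x : Bool, auxT W V x y ≤ 1/2 * V x y * auxQ W y / auxQ V y := by
        intro x
        rw [auxT]
        split_ifs with h
        · exact le_refl _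
        · exact div_nonneg (mul_nonneg (mul_nonneg (by norm_num) (hV0 x y)) hqw0) hqv.le
      calc ∑ x : Bool, auxT W V x y
          ≤ ∑ x : Bool, 1/2 * V x y * auxQ W y / auxQ V y :=
            Finset.sum_le_sum fun x _ => hx x
        _ = auxQ W y := by
            rw [Fintype.sum_bool, ← add_div,
              show 1/2 * V true y * auxQ W y + 1/2 * V false y * auxQ W y
                = auxQ W y * auxQ V y from by simp only [auxQ]; ring,
              mul_div_assoc, div_self hqv.ne', mul_one]
    · have hqv0 : auxQ V y = 0 := le_antisymm (not_lt.mp hqv)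
        (by simp only [auxQ]; nlinarith [hV0 false y, hV0 true y])
      have hVf : V false y = 0 ∧ V true y = 0 := by
        constructor <;> (simp only [auxQ] at hqv0; nlinarith [hV0 false y, hV0 true y])
      have hx : ∀ x : Bool, auxT W V x y = 0 := by
        intro x
        rw [auxT, if_neg]
        intro hw
        have h := hpos x y hw
        cases x
        · simp [hVf.1] at h
        · simp [hVf.2] at h
      simp only [hx, Finset.sum_const_zero]
      exact hqw0
  have hT : ∑ y : Y, ∑ x : Bool, auxT W V x y ≤ 1 := by
    calc ∑ y : Y, ∑ x : Bool, auxT W V x y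
        ≤ ∑ y : Y, auxQ W y := Finset.sum_le_sum fun y _ => hinner y
      _ = 1 := hQW
  -- sum up the pointwise inequalities
  have hstep : ∑ y : Y, ∑ x : Bool,
      (1/2 * W x y * Real.logb 2 (V x y / auxQ V y)
        + (1/2 * W x y - auxT W V x y) / Real.log 2)
      ≤ ∑ y : Y, ∑ x : Bool, 1/2 * W x y * Real.logb 2 (W x y / auxQ W y) :=
    Finset.sum_le_sum fun y _ => Finset.sum_le_sum fun x _ => hkey y x
  have hsplit : ∑ y : Y, ∑ x : Bool,
      (1/2 * W x y * Real.logb 2 (V x y / auxQ V y)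
        + (1/2 * W x y - auxT W V x y) / Real.log 2)
      = (∑ y : Y, ∑ x : Bool, 1/2 * W x y * Real.logb 2 (V x y / auxQ V y))
        + ((∑ y : Y, ∑ x : Bool, 1/2 * W x y)
            - ∑ y : Y, ∑ x : Bool, auxT W V x y) / Real.log 2 := by
    simp only [Finset.sum_add_distrib, Finset.sum_sub_distrib, ← Finset.sum_div]
  have hIV : Ifun W V = ∑ y : Y, ∑ x : Bool, 1/2 * W x y * Real.logb 2 (V x y / auxQ V y) := by
    simp only [Ifun, auxQ]
  have hIW : Ifun W W = ∑ y : Y, ∑ x : Bool, 1/2 * W x y * Real.logb 2 (W x y / auxQ W y) := by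
    simp only [Ifun, auxQ]
  rw [hsplit, hP, ← hIV, ← hIW] at hstep
  have h0 : 0 ≤ (1 - ∑ y : Y, ∑ x : Bool, auxT W V x y) / Real.log 2 :=
    div_nonneg (by linarith) hL.le
  linarith

end
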